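/- Let R be a semiprime left noetherian ring and σ an endomorphism of R having a large image. The following are equivalent: (1) σ is injective; (2) σ maps regular elements to regular elements; (3) there exists a regular element c ∈ R with Rc ⊆ σ(R) and σ^n(c) regular in R for all n ≥ 1; (4) for every n ≥ 1, σ^n has a large image. -/

import Mathlib

universe u v

/-- The left annihilator of the set `L` in `S` is zero. -/
def LAnnZero (S : Type u) [Ring S] (L : Set S) : Prop :=
  ∀ a : S, (∀ x ∈ L, a * x = 0) → a = 0

/-- The right annihilator of the set `L` in `S` is zero. -/
def RAnnZero (S : Type u) [Ring S] (L : Set S) : Prop :=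
  ∀ a : S, (∀ x ∈ L, x * a = 0) → a = 0

/-- A left ideal is essential: it meets every nonzero left ideal nontrivially. -/
def IsEssentialLeftIdeal {S : Type u} [Ring S] (L : Ideal S) : Prop :=
  ∀ I : Ideal S, I ≠ ⊥ → L ⊓ I ≠ ⊥

/-- A (possibly noncommutative) ring is semiprime: `aRa = 0` implies `a = 0`. -/
def IsSemiprimeRing (S : Type u) [Ring S] : Prop :=
  ∀ a : S, (∀ r : S, a * r * a = 0) → a = 0

/-- A (possibly noncommutative) ring is prime: it is nonzero and `aRb = 0`
implies `a = 0` or `b = 0`. -/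
def IsPrimeRingE (S : Type u) [Ring S] : Prop :=
  Nontrivial S ∧ ∀ a b : S, (∀ r : S, a * r * b = 0) → a = 0 ∨ b = 0

/-- `a` is left regular: its left annihilator is zero. -/
def LeftReg {S : Type u} [Ring S] (a : S) : Prop := ∀ x : S, x * a = 0 → x = 0

/-- `a` is right regular: its right annihilator is zero. -/
def RightReg {S : Type u} [Ring S] (a : S) : Prop := ∀ x : S, a * x = 0 → x = 0

/-- `a` is regular: neither a left nor a right zero divisor. -/
def Reg {S : Type u} [Ring S] (a : S) : Prop := LeftReg a ∧ RightReg a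

/-- A self-map of a ring has large image: its range contains an essential
left ideal with zero right annihilator. -/
def HasLargeImage {S : Type u} [Ring S] (f : S → S) : Prop :=
  ∃ L : Ideal S, IsEssentialLeftIdeal L ∧ RAnnZero S (L : Set S) ∧ (L : Set S) ⊆ Set.range f

/-- The left annihilator of a set, as a left ideal. -/
def lAnnIdeal (S : Type u) [Ring S] (X : Set S) : Ideal S where
  carrier := {a | ∀ x ∈ X, a * x = 0}
  add_mem' := by intro a b ha hb x hx; rw [add_mul, ha x hx, hb x hx, add_zero]
  zero_mem' := by intro x hx; rw [zero_mul]
  smul_mem' := by intro r a ha x hx; simp only [smul_eq_mul, mul_assoc, ha x hx, mul_zero]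

/-- ACC on left annihilator ideals. -/
def AccLeftAnn (S : Type u) [Ring S] : Prop :=
  ∀ X : ℕ → Set S, (∀ n, lAnnIdeal S (X n) ≤ lAnnIdeal S (X (n + 1))) →
    ∃ N, ∀ m, N ≤ m → lAnnIdeal S (X m) = lAnnIdeal S (X N)

/-- Finite uniform (Goldie) dimension on the left: no infinite independent
family of nonzero left ideals. -/
def FinUdim (S : Type u) [Ring S] : Prop :=
  ¬ ∃ f : ℕ → Ideal S, (∀ n, f n ≠ ⊥) ∧ iSupIndep f

/-- Left Goldie ring: ACC on left annihilators and finite left uniform dimension. -/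
def IsLeftGoldie (S : Type u) [Ring S] : Prop := AccLeftAnn S ∧ FinUdim S

/-- The left uniform (Goldie) dimension of `S` is at least `n`. -/
def UdimGE (S : Type u) [Ring S] (n : ℕ) : Prop :=
  ∃ f : Fin n → Ideal S, (∀ i, f i ≠ ⊥) ∧ iSupIndep f

/-- `ι : R →+* Q` realizes `Q` as a classical left quotient ring of `R`:
`ι` is injective, regular elements become units, and every element of `Q`
is a left fraction `(ι s)⁻¹ * (ι a)` with `s` regular. -/
structure IsLeftQuotRing {R : Type u} {Q : Type v} [Ring R] [Ring Q] (ι : R →+* Q) : Prop where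
  inj : Function.Injective ι
  unit : ∀ a : R, Reg a → IsUnit (ι a)
  frac : ∀ q : Q, ∃ a s : R, Reg s ∧ ι s * q = ι a

/-- An ideal (a priori only a left ideal) is two-sided. -/
def IsTwoSided {S : Type u} [Ring S] (I : Ideal S) : Prop := ∀ x ∈ I, ∀ r : S, x * r ∈ I

/-- ACC on two-sided ideals. -/
def AccTwoSided (S : Type u) [Ring S] : Prop :=
  ∀ f : ℕ → Ideal S, (∀ n, IsTwoSided (f n)) → (∀ n, f n ≤ f (n + 1)) →
    ∃ N, ∀ m, N ≤ m → f m = f N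

/-- A trivially ordered set: no strict comparabilities. -/
def TrivOrd (P : Type u) [Preorder P] : Prop := ∀ x y : P, ¬ x < y

/-- `DevLE α P` : the deviation (in the sense of Gabriel–Rentschler) of the
poset `P` is at most `α` (where trivially ordered intervals count as having
deviation `-∞`). -/
def DevLE (α : Ordinal.{v}) (P : Type u) [Preorder P] : Prop :=
  ∀ f : ℕ → P, (∀ n, f (n + 1) ≤ f n) →
    ∃ N : ℕ, ∀ n, N ≤ n →
      TrivOrd ↥(Set.Icc (f (n + 1)) (f n)) ∨
      ∃ β, ∃ _ : β < α, DevLE β ↥(Set.Icc (f (n + 1)) (f n))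
termination_by α

/-- `R` has left Krull dimension in the sense of Gabriel–Rentschler: the
poset of left ideals of `R` has deviation. -/
def HasLeftKrullDim (R : Type u) [Ring R] : Prop :=
  ∃ α : Ordinal.{u}, DevLE α (Ideal R)

/-- `(A, ι, τ)` is a Cohn–Jordan extension of `(R, σ)`: `ι : R → A` is an
injective embedding, the automorphism `τ` of `A` extends `σ`, and every
element of `A` is mapped into `R` by some positive power of `τ`. -/
structure IsCohnJordan {R A : Type u} [Ring R] [Ring A] (σ : R →+* R) (ι : R →+* A)
    (τ : A ≃+* A) : Prop where
  inj : Function.Injective ι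
  comm : ∀ r : R, τ (ι r) = ι (σ r)
  small : ∀ a : A, ∃ n : ℕ, 1 ≤ n ∧ (⇑τ)^[n] a ∈ Set.range ι

section GoldieAux

variable {R : Type u} [Ring R]

lemma mem_lAnn {X : Set R} {a : R} : a ∈ lAnnIdeal R X ↔ ∀ x ∈ X, a * x = 0 := Iff.rfl

lemma mem_lAnn_singleton {y a : R} : a ∈ lAnnIdeal R {y} ↔ a * y = 0 := by
  simp [mem_lAnn]

lemma ess_mono {E F : Ideal R} (hE : IsEssentialLeftIdeal E) (hEF : E ≤ F) :
    IsEssentialLeftIdeal F := by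
  intro I hI h
  exact hE I hI (by rw [eq_bot_iff] at h ⊢; exact le_trans (inf_le_inf_right I hEF) h)

lemma ess_exists {E I : Ideal R} (hE : IsEssentialLeftIdeal E) (hI : I ≠ ⊥) :
    ∃ x, x ∈ E ∧ x ∈ I ∧ x ≠ 0 := by
  obtain ⟨x, hx, hx0⟩ := (Submodule.ne_bot_iff _).mp (hE I hI)
  exact ⟨x, hx.1, hx.2, hx0⟩

lemma ess_bot_all_zero {E : Ideal R} (hE : IsEssentialLeftIdeal E) (hEbot : E = ⊥)
    (x : R) : x = 0 := by
  by_contra hx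
  have h1 : Ideal.span {x} ≠ ⊥ := by simpa [Submodule.span_singleton_eq_bot] using hx
  exact hE _ h1 (by rw [hEbot, bot_inf_eq])

lemma ess_colon {E : Ideal R} (hE : IsEssentialLeftIdeal E) (r : R) :
    IsEssentialLeftIdeal (Submodule.comap (LinearMap.toSpanSingleton R R r) E) := by
  intro I hI hbot
  rcases eq_or_ne (Submodule.map (LinearMap.toSpanSingleton R R r) I) ⊥ with h | h
  · have hle : I ≤ Submodule.comap (LinearMap.toSpanSingleton R R r) E := by
      intro x hx
      have hx0 : LinearMap.toSpanSingleton R R r x ∈ (⊥ : Ideal R) := by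
        rw [← h]; exact Submodule.mem_map_of_mem hx
      rw [Submodule.mem_bot] at hx0
      simp [Submodule.mem_comap, hx0]
    apply hI
    rw [← hbot, inf_eq_right.mpr hle]
  · obtain ⟨w, hwE, hwI, hw0⟩ := ess_exists hE h
    obtain ⟨y, hyI, hyw⟩ := hwI
    have hy0 : y ≠ 0 := by rintro rfl; exact hw0 (by rw [← hyw]; simp)
    have hyc : y ∈ Submodule.comap (LinearMap.toSpanSingleton R R r) E := by
      rw [Submodule.mem_comap, hyw]; exact hwE
    have : y ∈ (⊥ : Ideal R) := by rw [← hbot]; exact ⟨hyc, hyI⟩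
    exact hy0 (by rwa [Submodule.mem_bot] at this)

lemma reg_one : Reg (1 : R) :=
  ⟨fun x h => by simpa using h, fun x h => by simpa using h⟩

lemma reg_mul {a b : R} (ha : Reg a) (hb : Reg b) : Reg (a * b) := by
  constructor
  · intro x hx
    rw [← mul_assoc] at hx
    exact ha.1 x (hb.1 _ hx)
  · intro x hx
    rw [mul_assoc] at hx
    exact hb.2 x (ha.2 _ hx)

lemma swap_pow (a b : R) (n : ℕ) : (a * b) ^ (n + 1) = a * ((b * a) ^ n * b) := by
  induction n with
  | zero => simp
  | succ n ih =>
    rw [pow_succ' (a * b) (n + 1), ih, pow_succ' (b * a) n]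
    simp only [mul_assoc]

variable [IsNoetherianRing R]

lemma exists_max (S : Set (Ideal R)) (hS : S.Nonempty) : ∃ M ∈ S, ∀ I ∈ S, ¬ M < I :=
  (set_has_maximal_iff_noetherian.mpr inferInstance) S hS

lemma chain_stab (f : ℕ →o Ideal R) : ∃ n, ∀ m, n ≤ m → f n = f m :=
  monotone_stabilizes_iff_noetherian.mpr inferInstance f

lemma spanSingleton_essential {c : R} (hc : LeftReg c) :
    IsEssentialLeftIdeal (Ideal.span {c}) := by
  intro I hI hbot
  set f : R →ₗ[R] R := LinearMap.toSpanSingleton R R c with hf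
  have happ : ∀ x : R, f x = x * c := fun x => by
    simp [hf, LinearMap.toSpanSingleton_apply, smul_eq_mul]
  have hrange : ∀ (p : Ideal R) (z : R), z ∈ Submodule.map f p → z ∈ Ideal.span {c} := by
    intro p z hz
    obtain ⟨y, -, rfl⟩ := hz
    exact Submodule.mem_span_singleton.mpr ⟨y, by rw [happ, smul_eq_mul]⟩
  have hker : ∀ x : R, f x = 0 → x = 0 := fun x hx => hc x (by rwa [happ] at hx)
  have hinj : Function.Injective f := by
    intro x y hxy
    have h0 : f (x - y) = 0 := by rw [map_sub, hxy, sub_self]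
    exact sub_eq_zero.mp (hker _ h0)
  set K : ℕ → Ideal R := fun n => Nat.rec I (fun _ p => Submodule.map f p) n with hK
  set J : ℕ → Ideal R := fun n => Nat.rec I (fun _ p => I ⊔ Submodule.map f p) n with hJ
  have hK0 : K 0 = I := rfl
  have hKs : ∀ n, K (n + 1) = Submodule.map f (K n) := fun n => rfl
  have hJ0 : J 0 = I := rfl
  have hJs : ∀ n, J (n + 1) = I ⊔ Submodule.map f (J n) := fun n => rfl
  have hJmono : ∀ n, J n ≤ J (n + 1) := by
    intro n
    induction n with
    | zero => simp only [hJs, hJ0]; exact le_sup_left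
    | succ n ih =>
      calc J (n+1) = I ⊔ Submodule.map f (J n) := hJs n
      _ ≤ I ⊔ Submodule.map f (J (n+1)) := sup_le_sup_left (Submodule.map_mono ih) I
      _ = J (n+2) := (hJs (n+1)).symm
  have hKJ : ∀ n, K n ≤ J n := by
    intro n
    induction n with
    | zero => rw [hK0, hJ0]
    | succ n ih =>
      rw [hKs n, hJs n]
      exact le_trans (Submodule.map_mono ih) le_sup_right
  have hdisj : ∀ n, K (n + 1) ⊓ J n = ⊥ := by
    intro n
    induction n with
    | zero =>
      rw [eq_bot_iff]
      rintro z ⟨hz1, hz2⟩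
      rw [← hbot]
      exact ⟨hrange _ _ (by rwa [hKs 0, hK0] at hz1), hz2⟩
    | succ n ih =>
      rw [eq_bot_iff]
      rintro z ⟨hz1, hz2⟩
      rw [hKs (n+1)] at hz1
      obtain ⟨u, hu, rfl⟩ := hz1
      rw [hJs n] at hz2
      obtain ⟨p, hp, w, hw, hpw⟩ := Submodule.mem_sup.mp hz2
      obtain ⟨w', hw', rfl⟩ := hw
      have hpz : p = f (u - w') := by rw [map_sub, ← hpw]; abel
      have hp0 : p = 0 := by
        have hpc : p ∈ Ideal.span {c} :=
          Submodule.mem_span_singleton.mpr ⟨u - w', by rw [hpz, happ, smul_eq_mul]⟩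
        have : p ∈ (⊥ : Ideal R) := by rw [← hbot]; exact ⟨hpc, hp⟩
        rwa [Submodule.mem_bot] at this
      have huw : u = w' := by
        apply sub_eq_zero.mp
        exact hker _ (by rw [← hpz, hp0])
      have hu0 : u = 0 := by
        have : u ∈ K (n + 1) ⊓ J n := ⟨hu, by rwa [huw]⟩
        rw [ih] at this
        rwa [Submodule.mem_bot] at this
      rw [hu0, map_zero]
      exact Submodule.zero_mem ⊥
  obtain ⟨N, hN'⟩ := chain_stab ⟨J, monotone_nat_of_le_succ hJmono⟩
  have hN : ∀ m, N ≤ m → J N = J m := hN'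
  have hKN : K (N + 1) = ⊥ := by
    rw [eq_bot_iff]
    intro z hz
    rw [← hdisj N]
    refine ⟨hz, ?_⟩
    have : z ∈ J (N + 1) := hKJ (N + 1) hz
    rwa [← hN (N + 1) (Nat.le_succ N)] at this
  have hIbot : ∀ n, K n = ⊥ → I = ⊥ := by
    intro n
    induction n with
    | zero => rw [hK0]; exact id
    | succ n ih =>
      intro h
      apply ih
      apply Submodule.map_injective_of_injective hinj
      rw [← hKs n, h, Submodule.map_bot]
  exact hI (hIbot (N + 1) hKN)

variable (hsp : IsSemiprimeRing R)
include hsp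

/-- The right annihilator of an essential left ideal is zero
(the left singular ideal of a semiprime left noetherian ring vanishes). -/
lemma ess_rann_zero {E : Ideal R} (hE : IsEssentialLeftIdeal E)
    {x : R} (hx : ∀ e ∈ E, e * x = 0) : x = 0 := by
  by_contra hx0
  set Y : Set R := {y | y ≠ 0 ∧ IsEssentialLeftIdeal (lAnnIdeal R {y})} with hY
  have hxY : x ∈ Y :=
    ⟨hx0, ess_mono hE (fun e he => mem_lAnn_singleton.mpr (hx e he))⟩
  obtain ⟨A, hAmem, hmax⟩ :=
    exists_max ((fun y => lAnnIdeal R {y}) '' Y) ⟨_, ⟨x, hxY, rfl⟩⟩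
  obtain ⟨y, hy, rfl⟩ := hAmem
  have key : ∀ r, y * r * y = 0 := by
    intro r
    rcases eq_or_ne (r * y) 0 with h | h
    · rw [mul_assoc, h, mul_zero]
    by_contra hz
    have hlann : lAnnIdeal R {y} ≤ lAnnIdeal R {y * r * y} := by
      intro t ht
      rw [mem_lAnn_singleton] at ht ⊢
      simp only [← mul_assoc]
      rw [ht, zero_mul, zero_mul]
    have hzY : (y * r * y) ∈ Y := ⟨hz, ess_mono hy.2 hlann⟩
    have heq : lAnnIdeal R {y * r * y} = lAnnIdeal R {y} := by
      rcases hlann.lt_or_eq with hlt | heq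
      · exact absurd hlt (hmax _ ⟨y * r * y, hzY, rfl⟩)
      · exact heq.symm
    have hry : IsEssentialLeftIdeal (lAnnIdeal R {r * y}) := by
      refine ess_mono (ess_colon hy.2 r) ?_
      intro t ht
      rw [Submodule.mem_comap] at ht
      have ht' : (t * r) * y = 0 := by
        have := mem_lAnn_singleton.mp ht
        simpa [LinearMap.toSpanSingleton_apply, smul_eq_mul] using this
      rw [mem_lAnn_singleton, ← mul_assoc]
      exact ht'
    have hyne : Ideal.span {y} ≠ ⊥ := by
      simpa [Submodule.span_singleton_eq_bot] using hy.1
    obtain ⟨w, hw1, hw2, hw3⟩ := ess_exists hry hyne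
    obtain ⟨s, rfl⟩ := Submodule.mem_span_singleton.mp hw2
    have hs : s ∈ lAnnIdeal R {y * r * y} := by
      rw [mem_lAnn_singleton]
      have hw1' : (s * y) * (r * y) = 0 := by
        have := mem_lAnn_singleton.mp hw1
        simpa [smul_eq_mul] using this
      calc s * (y * r * y) = (s * y) * (r * y) := by simp only [mul_assoc]
      _ = 0 := hw1'
    rw [heq, mem_lAnn_singleton] at hs
    exact hw3 (by simpa [smul_eq_mul] using hs)
  exact hy.1 (hsp y key)

/-- Utumi-type lemma: a nonzero element all of whose right multiples are
nilpotent cannot exist in a semiprime left noetherian ring. -/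
lemma nil_elt_zero {a : R} (h : ∀ s : R, IsNilpotent (a * s)) (ha : a ≠ 0) : False := by
  set S : Set R := {b | b ≠ 0 ∧ ∀ s, IsNilpotent (b * s)} with hS
  have haS : a ∈ S := ⟨ha, h⟩
  obtain ⟨A, hAmem, hmax⟩ :=
    exists_max ((fun y => lAnnIdeal R {y}) '' S) ⟨_, ⟨a, haS, rfl⟩⟩
  obtain ⟨b, hb, rfl⟩ := hAmem
  have key : ∀ t, b * t * b = 0 := by
    intro t
    rcases eq_or_ne (b * t) 0 with h0 | h0
    · rw [h0, zero_mul]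
    have hne : ∃ k, (b * t) ^ k = 0 := hb.2 t
    classical
    set k := Nat.find hne with hkdef
    have hk0 : (b * t) ^ k = 0 := Nat.find_spec hne
    have hk2 : 2 ≤ k := by
      by_contra hlt
      interval_cases k
      · simp only [pow_zero] at hk0
        exact hb.1 (by calc b = b * 1 := (mul_one b).symm
                       _ = b * 0 := by rw [hk0]
                       _ = 0 := mul_zero b)
      · rw [pow_one] at hk0; exact h0 hk0
    set c := (b * t) ^ (k - 1) with hcdef
    have hcne : c ≠ 0 := Nat.find_min hne (by omega)
    have hcform : c = b * (t * (b * t) ^ (k - 2)) := by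
      rw [hcdef, show k - 1 = (k - 2) + 1 by omega, pow_succ', mul_assoc]
    have hcS : c ∈ S := by
      refine ⟨hcne, fun s => ?_⟩
      rw [hcform, mul_assoc]
      exact hb.2 _
    have hlann : lAnnIdeal R {b} ≤ lAnnIdeal R {c} := by
      intro u hu
      rw [mem_lAnn_singleton] at hu ⊢
      rw [hcform, ← mul_assoc, hu, zero_mul]
    have heq : lAnnIdeal R {c} = lAnnIdeal R {b} := by
      rcases hlann.lt_or_eq with hlt | heq
      · exact absurd hlt (hmax _ ⟨c, hcS, rfl⟩)
      · exact heq.symm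
    have hbt : (b * t) ∈ lAnnIdeal R {c} := by
      rw [mem_lAnn_singleton, hcdef, ← pow_succ', show k - 1 + 1 = k by omega]
      exact hk0
    rw [heq, mem_lAnn_singleton] at hbt
    exact hbt
  exact hb.1 (hsp b key)

/-- A nonzero left ideal contains a nonzero element `a` with
`lann(a²) = lann(a)`. -/
lemma exists_good {M : Ideal R} (hM : M ≠ ⊥) :
    ∃ a, a ∈ M ∧ a ≠ 0 ∧ ∀ t : R, t * (a * a) = 0 → t * a = 0 := by
  have hnn : ∃ x ∈ M, ¬ IsNilpotent x := by
    by_contra hcon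
    push_neg at hcon
    obtain ⟨x, hxM, hx0⟩ := (Submodule.ne_bot_iff M).mp hM
    refine nil_elt_zero hsp (a := x) ?_ hx0
    intro s
    obtain ⟨m, hm⟩ := hcon (s * x) (by simpa [smul_eq_mul] using M.smul_mem s hxM)
    exact ⟨m + 1, by rw [swap_pow, hm, zero_mul, mul_zero]⟩
  obtain ⟨x, hxM, hxnil⟩ := hnn
  have hmono : Monotone (fun n => lAnnIdeal R {x ^ (n + 1)}) := by
    apply monotone_nat_of_le_succ
    intro n t ht
    rw [mem_lAnn_singleton] at ht ⊢
    rw [pow_succ, ← mul_assoc, ht, zero_mul]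
  obtain ⟨N, hN'⟩ := chain_stab ⟨_, hmono⟩
  have hN : ∀ m, N ≤ m → lAnnIdeal R {x ^ (N + 1)} = lAnnIdeal R {x ^ (m + 1)} := hN'
  refine ⟨x ^ (N + 1), ?_, ?_, ?_⟩
  · have : x ^ (N + 1) = x ^ N • x := by rw [smul_eq_mul, pow_succ]
    rw [this]; exact M.smul_mem _ hxM
  · intro h0; exact hxnil ⟨N + 1, h0⟩
  · intro t ht
    have h2 : t ∈ lAnnIdeal R {x ^ (2 * N + 1 + 1)} := by
      rw [mem_lAnn_singleton]
      calc t * x ^ (2 * N + 1 + 1) = t * (x ^ (N + 1) * x ^ (N + 1)) := by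
            rw [← pow_add]; ring_nf
      _ = 0 := ht
    rw [← hN (2 * N + 1) (by omega)] at h2
    exact mem_lAnn_singleton.mp h2

end GoldieAux


section GoldieAux2

variable {R : Type u} [Ring R]

/-- Triangular sum lemma. -/
lemma triangular (n : ℕ) : ∀ (a r : ℕ → R),
    (∀ i, ∀ t : R, t * (a i * a i) = 0 → t * a i = 0) →
    (∀ i j, i < j → a j * a i = 0) →
    (∀ j, j < n → (∑ i ∈ Finset.range n, r i * a i) * a j = 0) →
    ∀ i, i < n → r i * a i = 0 := by
  induction n with
  | zero => intro a r _ _ _ i hi; omega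
  | succ n IH =>
    intro a r hsq htri hmain i hi
    have hsplit : (∑ i ∈ Finset.range (n + 1), r i * a i)
        = (∑ i ∈ Finset.range n, r (i + 1) * a (i + 1)) + r 0 * a 0 :=
      Finset.sum_range_succ' _ n
    have htail0 : (∑ i ∈ Finset.range n, r (i + 1) * a (i + 1)) * a 0 = 0 := by
      rw [Finset.sum_mul]
      apply Finset.sum_eq_zero
      intro j _
      rw [mul_assoc, htri 0 (j + 1) (Nat.succ_pos j), mul_zero]
    have hr0 : r 0 * a 0 = 0 := by
      apply hsq 0 (r 0)
      have h0 := hmain 0 (Nat.succ_pos n)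
      rw [hsplit, add_mul, htail0, zero_add, mul_assoc] at h0
      exact h0
    have htail : ∀ j, j < n →
        (∑ i ∈ Finset.range n, r (i + 1) * a (i + 1)) * a (j + 1) = 0 := by
      intro j hj
      have h1 := hmain (j + 1) (by omega)
      rw [hsplit, hr0, add_zero] at h1
      exact h1
    have hIH := IH (fun i => a (i + 1)) (fun i => r (i + 1)) (fun i => hsq (i + 1))
        (fun i j hij => htri (i + 1) (j + 1) (by omega)) htail
    match i, hi with
    | 0, _ => exact hr0
    | (i + 1), hi => exact hIH i (by omega)

variable [IsNoetherianRing R] (hsp : IsSemiprimeRing R)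
include hsp

/-- Goldie: an essential left ideal of a semiprime left noetherian ring
contains a left regular element. -/
lemma ess_exists_leftReg {E : Ideal R} (hE : IsEssentialLeftIdeal E) :
    ∃ c, c ∈ E ∧ LeftReg c := by
  classical
  have pick_ex : ∀ M : Ideal R, ∃ a : R, M ≠ ⊥ →
      a ∈ M ∧ a ≠ 0 ∧ ∀ t : R, t * (a * a) = 0 → t * a = 0 := by
    intro M
    by_cases h : M ≠ ⊥
    · obtain ⟨a, h1, h2, h3⟩ := exists_good hsp h
      exact ⟨a, fun _ => ⟨h1, h2, h3⟩⟩
    · exact ⟨0, fun h' => absurd h' h⟩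
  choose pick pick_spec using pick_ex
  set Ms : ℕ → Ideal R := fun n => Nat.rec E (fun _ p => p ⊓ lAnnIdeal R {pick p}) n
    with hMsdef
  set g : ℕ → R := fun n => pick (Ms n) with hgdef
  have hMs0 : Ms 0 = E := rfl
  have hMs_succ : ∀ n, Ms (n + 1) = Ms n ⊓ lAnnIdeal R {g n} := fun n => rfl
  have hMs_anti : ∀ {i j}, i ≤ j → Ms j ≤ Ms i := by
    intro i j hij
    induction hij with
    | refl => exact le_refl _
    | step h ih => exact le_trans (by rw [hMs_succ]; exact inf_le_left) ih
  have hMsE : ∀ n, Ms n ≤ E := fun n => by rw [← hMs0]; exact hMs_anti (Nat.zero_le n)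
  by_cases hall : ∀ n, Ms n ≠ ⊥
  · exfalso
    have hg : ∀ n, g n ∈ Ms n ∧ g n ≠ 0 ∧ ∀ t, t * (g n * g n) = 0 → t * g n = 0 :=
      fun n => pick_spec (Ms n) (hall n)
    have htri : ∀ i j, i < j → g j * g i = 0 := by
      intro i j hij
      have h2 : Ms j ≤ lAnnIdeal R {g i} :=
        le_trans (hMs_anti (show i + 1 ≤ j from hij))
          (by rw [hMs_succ i]; exact inf_le_right)
      exact mem_lAnn_singleton.mp (h2 (hg j).1)
    have hCmono : Monotone (fun n => Submodule.span R (g '' Set.Iio n)) :=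
      fun i j hij => Submodule.span_mono
        (Set.image_mono (fun x hx => lt_of_lt_of_le hx hij))
    obtain ⟨N, hN'⟩ := chain_stab ⟨_, hCmono⟩
    have hN : ∀ m, N ≤ m →
        Submodule.span R (g '' Set.Iio N) = Submodule.span R (g '' Set.Iio m) := hN'
    have hmem : g N ∈ Submodule.span R (g '' Set.Iio N) := by
      rw [hN (N + 1) (Nat.le_succ N)]
      exact Submodule.subset_span ⟨N, by simp, rfl⟩
    have himg : g '' Set.Iio N = Set.range (fun i : Fin N => g i) := by
      ext z
      constructor
      · rintro ⟨i, hi, rfl⟩; exact ⟨⟨i, hi⟩, rfl⟩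
      · rintro ⟨i, rfl⟩; exact ⟨i, i.2, rfl⟩
    rw [himg] at hmem
    obtain ⟨cf, hcf⟩ := (Submodule.mem_span_range_iff_exists_fun R).mp hmem
    set r' : ℕ → R := fun i => if h : i < N then cf ⟨i, h⟩ else 0 with hr'
    have hsum : (∑ i ∈ Finset.range N, r' i * g i) = g N := by
      rw [← hcf, ← Fin.sum_univ_eq_sum_range (fun i => r' i * g i) N]
      apply Finset.sum_congr rfl
      intro i _
      simp [hr', i.2, smul_eq_mul]
    have hmain : ∀ j, j < N → (∑ i ∈ Finset.range N, r' i * g i) * g j = 0 := by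
      intro j hj
      rw [hsum]
      exact htri j N hj
    have hzero := triangular N g r' (fun i => (hg i).2.2) htri hmain
    have : g N = 0 := by
      rw [← hsum]
      exact Finset.sum_eq_zero (fun i hi => hzero i (Finset.mem_range.mp hi))
    exact (hg N).2.1 this
  · push_neg at hall
    have hex : ∃ n, Ms n = ⊥ := hall
    set n := Nat.find hex with hn
    have hnbot : Ms n = ⊥ := Nat.find_spec hex
    have hnmin : ∀ i, i < n → Ms i ≠ ⊥ := fun i hi => Nat.find_min hex hi
    match n, hnbot, hnmin with
    | 0, hnbot, _ =>
      refine ⟨0, E.zero_mem, fun x _ => ?_⟩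
      exact ess_bot_all_zero hE hnbot x
    | (k + 1), hnbot, hnmin =>
      have hg : ∀ i, i < k + 1 →
          g i ∈ Ms i ∧ g i ≠ 0 ∧ ∀ t, t * (g i * g i) = 0 → t * g i = 0 :=
        fun i hi => pick_spec (Ms i) (hnmin i hi)
      have htri : ∀ i j, i < j → j < k + 1 → g j * g i = 0 := by
        intro i j hij hj
        have h2 : Ms j ≤ lAnnIdeal R {g i} :=
          le_trans (hMs_anti (show i + 1 ≤ j from hij))
            (by rw [hMs_succ i]; exact inf_le_right)
        exact mem_lAnn_singleton.mp (h2 (hg j hj).1)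
      refine ⟨∑ i ∈ Finset.range (k + 1), g i, ?_, ?_⟩
      · apply Submodule.sum_mem
        intro i hi
        exact hMsE i ((hg i (Finset.mem_range.mp hi)).1)
      · intro x hx
        -- pad sequences beyond k+1 to make triangular applicable
        set a : ℕ → R := fun i => if i < k + 1 then g i else 0 with ha
        have hsq' : ∀ i, ∀ t : R, t * (a i * a i) = 0 → t * a i = 0 := by
          intro i t ht
          by_cases hi : i < k + 1
          · simp only [ha, if_pos hi] at ht ⊢
            exact (hg i hi).2.2 t ht
          · simp only [ha, if_neg hi, mul_zero]
        have htri' : ∀ i j, i < j → a j * a i = 0 := by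
          intro i j hij
          by_cases hj : j < k + 1
          · have hi : i < k + 1 := by omega
            simp only [ha, if_pos hi, if_pos hj]
            exact htri i j hij hj
          · simp only [ha, if_neg hj, zero_mul]
        have hsuma : (∑ i ∈ Finset.range (k + 1), x * a i)
            = x * (∑ i ∈ Finset.range (k + 1), g i) := by
          rw [Finset.mul_sum]
          apply Finset.sum_congr rfl
          intro i hi
          rw [ha]
          simp [Finset.mem_range.mp hi]
        have hmain : ∀ j, j < k + 1 →
            (∑ i ∈ Finset.range (k + 1), (fun _ => x) i * a i) * a j = 0 := by
          intro j hj
          simp only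
          rw [hsuma, hx, zero_mul]
        have hzero := triangular (k + 1) a (fun _ => x) hsq' htri' hmain
        -- x * g i = 0 for all i < k+1
        have hxg : ∀ i, i < k + 1 → x * g i = 0 := by
          intro i hi
          have := hzero i hi
          simpa only [ha, if_pos hi] using this
        by_contra hx0
        have hxne : Ideal.span {x} ≠ ⊥ := by
          simpa [Submodule.span_singleton_eq_bot] using hx0
        obtain ⟨w, hwE, hwx, hw0⟩ := ess_exists hE hxne
        obtain ⟨u, rfl⟩ := Submodule.mem_span_singleton.mp hwx
        have hwMs : ∀ m, m ≤ k + 1 → (u • x) ∈ Ms m := by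
          intro m
          induction m with
          | zero => intro _; rw [hMs0]; exact hwE
          | succ m ih =>
            intro hm
            rw [hMs_succ m]
            refine ⟨ih (by omega), mem_lAnn_singleton.mpr ?_⟩
            rw [smul_eq_mul, mul_assoc, hxg m (by omega), mul_zero]
        have : (u • x) ∈ (⊥ : Ideal R) := by rw [← hnbot]; exact hwMs (k + 1) le_rfl
        exact hw0 (by rwa [Submodule.mem_bot] at this)

/-- In a semiprime left noetherian ring, left regular implies regular. -/
lemma leftReg_reg {c : R} (hc : LeftReg c) : Reg c := by
  refine ⟨hc, ?_⟩
  intro x hx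
  apply ess_rann_zero hsp (spanSingleton_essential hc)
  intro e he
  obtain ⟨s, rfl⟩ := Submodule.mem_span_singleton.mp he
  rw [smul_eq_mul, mul_assoc, hx, mul_zero]

end GoldieAux2


section MainImplications

variable {R : Type u} [Ring R]

lemma imp41 [IsNoetherianRing R] (σ : R →+* R)
    (h4 : ∀ n : ℕ, 1 ≤ n → HasLargeImage ((⇑σ)^[n])) : Function.Injective σ := by
  have hmono : Monotone (fun n => RingHom.ker (σ ^ (n + 1))) := by
    apply monotone_nat_of_le_succ
    intro n x hx
    rw [RingHom.mem_ker] at hx ⊢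
    rw [RingHom.coe_pow] at hx ⊢
    rw [Function.iterate_succ_apply', hx, map_zero]
  obtain ⟨N, hN'⟩ := chain_stab ⟨_, hmono⟩
  have hN : ∀ m, N ≤ m → RingHom.ker (σ ^ (N + 1)) = RingHom.ker (σ ^ (m + 1)) := hN'
  rw [injective_iff_map_eq_zero]
  intro a ha
  by_contra ha0
  obtain ⟨L, hLess, -, hLsub⟩ := h4 (N + 1) (by omega)
  have haspan : Ideal.span {a} ≠ ⊥ := by
    simpa [Submodule.span_singleton_eq_bot] using ha0
  obtain ⟨b, hbL, hbspan, hb0⟩ := ess_exists hLess haspan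
  obtain ⟨u, rfl⟩ := Submodule.mem_span_singleton.mp hbspan
  have hσb : σ (u • a) = 0 := by
    rw [smul_eq_mul, map_mul, ha, mul_zero]
  obtain ⟨y, hy⟩ := hLsub hbL
  have hy2 : (⇑σ)^[N + 2] y = 0 := by
    rw [Function.iterate_succ_apply', hy, hσb]
  have hyker : y ∈ RingHom.ker (σ ^ (N + 2)) := by
    rw [RingHom.mem_ker, RingHom.coe_pow]; exact hy2
  have hyker' : y ∈ RingHom.ker (σ ^ (N + 1)) := by
    rw [hN (N + 1) (Nat.le_succ N)]; exact hyker
  rw [RingHom.mem_ker, RingHom.coe_pow] at hyker'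
  exact hb0 (by rw [← hy, hyker'])

variable (hsp : IsSemiprimeRing R) [IsNoetherianRing R]
include hsp

lemma imp12 (σ : R →+* R) (hli : HasLargeImage ⇑σ) (hinj : Function.Injective σ)
    {a : R} (ha : Reg a) : Reg (σ a) := by
  obtain ⟨L, hLess, -, hLsub⟩ := hli
  constructor
  · -- LeftReg
    intro x hx
    apply ess_rann_zero hsp (ess_colon hLess x)
    intro d hd
    rw [Submodule.mem_comap] at hd
    have hd' : d * x ∈ L := by
      simpa [LinearMap.toSpanSingleton_apply, smul_eq_mul] using hd
    obtain ⟨y, hy⟩ := hLsub hd'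
    have h1 : σ (y * a) = 0 := by
      rw [map_mul, hy, mul_assoc, hx, mul_zero]
    have h2 : y * a = 0 := hinj (by rw [h1, map_zero])
    have h3 : y = 0 := ha.1 y h2
    rw [← hy, h3, map_zero]
  · -- RightReg
    intro x hx
    set S₀ : Set R := {w | w ∈ L ∧ ∃ y : R, w = σ (y * a)} with hS₀
    have hkill : ∀ e ∈ Submodule.span R S₀, e * x = 0 := by
      intro e he
      have hle : Submodule.span R S₀ ≤ lAnnIdeal R {x} := by
        rw [Submodule.span_le]
        rintro w ⟨-, y, rfl⟩
        rw [SetLike.mem_coe, mem_lAnn_singleton, map_mul, mul_assoc, hx, mul_zero]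
      exact mem_lAnn_singleton.mp (hle he)
    have hess : IsEssentialLeftIdeal (Submodule.span R S₀) := by
      intro I hI hbot
      obtain ⟨b, hbL, hbI, hb0⟩ := ess_exists hLess hI
      obtain ⟨y, hy⟩ := hLsub hbL
      have hy0 : y ≠ 0 := by rintro rfl; exact hb0 (by rw [← hy, map_zero])
      have hyne : Ideal.span {y} ≠ ⊥ := by
        simpa [Submodule.span_singleton_eq_bot] using hy0
      obtain ⟨w, hwa, hwy, hw0⟩ := ess_exists (spanSingleton_essential ha.1) hyne
      obtain ⟨z, rfl⟩ := Submodule.mem_span_singleton.mp hwy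
      obtain ⟨u, hu⟩ := Submodule.mem_span_singleton.mp hwa
      have hb' : σ z * b ∈ Submodule.span R S₀ ⊓ I := by
        constructor
        · apply Submodule.subset_span
          refine ⟨by simpa [smul_eq_mul] using L.smul_mem (σ z) hbL, u, ?_⟩
          have hu' : u * a = z * y := by simpa [smul_eq_mul] using hu
          rw [← hy, ← map_mul, hu']
        · simpa [smul_eq_mul] using I.smul_mem (σ z) hbI
      have hbne : σ z * b ≠ 0 := by
        intro h0
        have : σ (z * y) = 0 := by rw [map_mul, hy, h0]
        have : z * y = 0 := hinj (by rw [this, map_zero])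
        exact hw0 (by rw [smul_eq_mul, this])
      rw [hbot] at hb'
      exact hbne (by rwa [Submodule.mem_bot] at hb')
    exact ess_rann_zero hsp hess hkill

lemma imp23 (σ : R →+* R) (hli : HasLargeImage ⇑σ)
    (h2 : ∀ a : R, Reg a → Reg (σ a)) :
    ∃ c : R, Reg c ∧ (∀ r : R, r * c ∈ Set.range ⇑σ) ∧
      ∀ n : ℕ, 1 ≤ n → Reg ((⇑σ)^[n] c) := by
  obtain ⟨L, hLess, -, hLsub⟩ := hli
  obtain ⟨c, hcL, hcreg⟩ := ess_exists_leftReg hsp hLess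
  have hreg : Reg c := leftReg_reg hsp hcreg
  refine ⟨c, hreg, fun r => hLsub (by simpa [smul_eq_mul] using L.smul_mem r hcL), ?_⟩
  intro n hn
  induction n with
  | zero => omega
  | succ n IH =>
    rcases Nat.eq_or_lt_of_le hn with h | h
    · have : n = 0 := by omega
      subst this
      simpa using h2 c hreg
    · have hn' : 1 ≤ n := by omega
      rw [Function.iterate_succ_apply']
      exact h2 _ (IH hn')

omit hsp in
lemma imp34 (σ : R →+* R)
    (h3 : ∃ c : R, Reg c ∧ (∀ r : R, r * c ∈ Set.range ⇑σ) ∧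
      ∀ n : ℕ, 1 ≤ n → Reg ((⇑σ)^[n] c)) :
    ∀ n : ℕ, 1 ≤ n → HasLargeImage ((⇑σ)^[n]) := by
  obtain ⟨c, hc, hrc, hcn⟩ := h3
  have hregm : ∀ m : ℕ, Reg ((⇑σ)^[m] c) := by
    intro m
    cases m with
    | zero => exact hc
    | succ m => exact hcn (m + 1) (by omega)
  set D : ℕ → ℕ → R :=
    fun n => Nat.rec (fun _ => (1 : R)) (fun _ ih m => (⇑σ)^[m] c * ih (m + 1)) n
    with hD
  have hD0 : ∀ m, D 0 m = 1 := fun m => rfl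
  have hDs : ∀ n m, D (n + 1) m = (⇑σ)^[m] c * D n (m + 1) := fun n m => rfl
  have hDreg : ∀ n m, Reg (D n m) := by
    intro n
    induction n with
    | zero => intro m; rw [hD0]; exact reg_one
    | succ n ih =>
      intro m
      rw [hDs]
      exact reg_mul (hregm m) (ih (m + 1))
  have hDshift : ∀ n m, σ (D n m) = D n (m + 1) := by
    intro n
    induction n with
    | zero => intro m; rw [hD0, hD0, map_one]
    | succ n ih =>
      intro m
      rw [hDs, hDs, map_mul, ih (m + 1), Function.iterate_succ_apply' (⇑σ) m c]
  have hDrange : ∀ n r, r * D n 0 ∈ Set.range ((⇑σ)^[n]) := by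
    intro n
    induction n with
    | zero => intro r; exact ⟨r * D 0 0, rfl⟩
    | succ n ih =>
      intro r
      obtain ⟨s, hs⟩ := hrc r
      obtain ⟨t, ht⟩ := ih s
      refine ⟨t, ?_⟩
      rw [Function.iterate_succ_apply', ht, map_mul, hDshift n 0]
      rw [hDs, ← mul_assoc, hs]
      rfl
  intro n _
  refine ⟨Ideal.span {D n 0}, spanSingleton_essential (hDreg n 0).1, ?_, ?_⟩
  · intro a hall
    apply (hDreg n 0).2
    exact hall (D n 0) (Submodule.mem_span_singleton_self _)
  · intro w hw
    obtain ⟨u, rfl⟩ := Submodule.mem_span_singleton.mp hw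
    rw [smul_eq_mul]
    exact hDrange n u

end MainImplications


/-- For a semiprime left noetherian ring `R` and an endomorphism `σ` with
large image, the following are equivalent: (1) `σ` is injective; (2) `σ`
maps regular elements to regular elements; (3) there is a regular `c` with
`Rc ⊆ σ(R)` and `σⁿ(c)` regular for all `n ≥ 1`; (4) every `σⁿ`, `n ≥ 1`,
has large image. -/
theorem stmt13 {R : Type u} [Ring R] (hsp : IsSemiprimeRing R) [IsNoetherianRing R]
    (σ : R →+* R) (hli : HasLargeImage ⇑σ) :
    (Function.Injective σ ↔ ∀ a : R, Reg a → Reg (σ a)) ∧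
    (Function.Injective σ ↔ ∃ c : R, Reg c ∧ (∀ r : R, r * c ∈ Set.range σ) ∧
      ∀ n : ℕ, 1 ≤ n → Reg ((⇑σ)^[n] c)) ∧
    (Function.Injective σ ↔ ∀ n : ℕ, 1 ≤ n → HasLargeImage ((⇑σ)^[n])) := by
  have h12 := fun h1 (a : R) (ha : Reg a) => imp12 hsp σ hli h1 ha
  have h23 := imp23 hsp σ hli
  have h34 := imp34 σ
  have h41 := imp41 σ
  refine ⟨⟨h12, fun h2 => h41 (h34 (h23 h2))⟩,
    ⟨fun h1 => h23 (h12 h1), fun h3 => h41 (h34 h3)⟩,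
    ⟨fun h1 => h34 (h23 (h12 h1)), h41⟩⟩
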